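/- arXiv:1508.07144 — 2 statements merged into one kernel-verified Lean document; each statement's English description precedes it below -/
import Mathlib

section
/- For a random walk (S_n) on the integers, the function a ↦ P[N_n* ≥ a] is sub-multiplicative: for all positive integers a, b and all n ≥ 1, P[N_n* ≥ a + b] ≤ P[N_n* ≥ a] · P[N_n* ≥ b], where N_n* = sup_y #{k ∈ {1,...,n} : S_k = y} is the maximal local time up to time n. -/
open MeasureTheory ProbabilityTheory



/-- Position of the walk with increments `x` after `j` steps. -/
def walk (x : ℕ → ℤ) (j : ℕ) : ℤ := ∑ k ∈ Finset.range j, x k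

/-- Maximal local time on `[1, m]` of the walk with increments `x`. -/
def nsup (m : ℕ) (x : ℕ → ℤ) : ℕ :=
  (Finset.Icc 1 m).sup fun k => ((Finset.Icc 1 m).filter fun j => walk x j = walk x k).card

lemma walk_congr {x y : ℕ → ℤ} {m j : ℕ} (h : ∀ i < m, x i = y i) (hj : j ≤ m) :
    walk x j = walk y j := by
  unfold walk
  exact Finset.sum_congr rfl fun i hi => h i (lt_of_lt_of_le (Finset.mem_range.1 hi) hj)

lemma nsup_congr {x y : ℕ → ℤ} {m : ℕ} (h : ∀ i < m, x i = y i) : nsup m x = nsup m y := by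
  unfold nsup
  refine Finset.sup_congr rfl fun k hk => ?_
  have hk' : k ≤ m := (Finset.mem_Icc.1 hk).2
  congr 1
  refine Finset.filter_congr fun j hj => ?_
  have hj' : j ≤ m := (Finset.mem_Icc.1 hj).2
  rw [walk_congr h hj', walk_congr h hk']

lemma nsup_zero (x : ℕ → ℤ) : nsup 0 x = 0 := by
  unfold nsup
  rw [Finset.Icc_eq_empty (by omega)]
  rfl

lemma nsup_mono (x : ℕ → ℤ) {m n : ℕ} (h : m ≤ n) : nsup m x ≤ nsup n x := by
  refine Finset.sup_le fun k hk => ?_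
  have hk' : k ∈ Finset.Icc 1 n := by
    rw [Finset.mem_Icc] at hk ⊢; omega
  refine le_trans ?_ (Finset.le_sup (f := fun k => ((Finset.Icc 1 n).filter
    fun j => walk x j = walk x k).card) hk')
  refine Finset.card_le_card ?_
  intro j hj
  rw [Finset.mem_filter, Finset.mem_Icc] at hj ⊢
  exact ⟨⟨hj.1.1, hj.1.2.trans h⟩, hj.2⟩

lemma walk_shift (x : ℕ → ℤ) (t j : ℕ) :
    walk (fun i => x (t + i)) j = walk x (t + j) - walk x t := by
  induction j with
  | zero => simp [walk]
  | succ j ih =>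
    have h1 : walk (fun i => x (t + i)) (j + 1) = walk (fun i => x (t + i)) j + x (t + j) :=
      Finset.sum_range_succ _ _
    have h2 : walk x (t + (j + 1)) = walk x (t + j) + x (t + j) :=
      Finset.sum_range_succ _ _
    rw [h1, h2, ih]; ring

lemma count_le (x : ℕ → ℤ) (a t : ℕ) (htmin : ∀ s < t, ¬ a ≤ nsup s x) (y : ℤ) :
    (((Finset.Icc 1 t)).filter fun j => walk x j = y).card ≤ a := by
  by_contra hcon
  push_neg at hcon
  set U := (Finset.Icc 1 t).filter fun j => walk x j = y with hU
  have hUne : U.Nonempty := Finset.card_pos.1 (by omega)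
  rcases Nat.eq_zero_or_pos a with rfl | hapos
  · -- a = 0 : t must be positive, then contradiction at s = 0
    have ht0 : 0 < t := by
      rcases hUne with ⟨u, hu⟩
      have := (Finset.mem_Icc.1 (Finset.mem_filter.1 hu).1)
      omega
    exact htmin 0 ht0 (Nat.zero_le _)
  · set u := U.max' hUne with hu
    have huU : u ∈ U := U.max'_mem hUne
    have hU' : a ≤ (U.erase u).card := by
      rw [Finset.card_erase_of_mem huU]; omega
    have hU'ne : (U.erase u).Nonempty := Finset.card_pos.1 (by omega)
    set u' := (U.erase u).max' hU'ne with hu'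
    have hu'U : u' ∈ U.erase u := (U.erase u).max'_mem hU'ne
    have hu'lt : u' < u := lt_of_le_of_ne (U.le_max' u' (Finset.mem_of_mem_erase hu'U))
      (Finset.ne_of_mem_erase hu'U)
    have hut : u ≤ t := (Finset.mem_Icc.1 (Finset.mem_filter.1 huU).1).2
    have hu'pos : 1 ≤ u' :=
      (Finset.mem_Icc.1 (Finset.mem_filter.1 (Finset.mem_of_mem_erase hu'U)).1).1
    have hwu' : walk x u' = y := (Finset.mem_filter.1 (Finset.mem_of_mem_erase hu'U)).2
    refine htmin u' (by omega) ?_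
    refine le_trans ?_ (Finset.le_sup (f := fun k => ((Finset.Icc 1 u').filter
      fun j => walk x j = walk x k).card) (Finset.mem_Icc.2 ⟨hu'pos, le_refl _⟩))
    refine le_trans hU' (Finset.card_le_card ?_)
    intro j hj
    have hjU := Finset.mem_of_mem_erase hj
    have hj1 := Finset.mem_filter.1 hjU
    have hjle : j ≤ u' := (U.erase u).le_max' j hj
    rw [Finset.mem_filter, Finset.mem_Icc]
    exact ⟨⟨(Finset.mem_Icc.1 hj1.1).1, hjle⟩, by rw [hj1.2, hwu']⟩

lemma key_shift (x : ℕ → ℤ) (n a b t : ℕ) (ha : 0 < a) (hb : 0 < b)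
    (hab : a + b ≤ nsup n x) (htmin : ∀ s < t, ¬ a ≤ nsup s x) (htn : t ≤ n) :
    b ≤ nsup (n - t) fun i => x (t + i) := by
  -- pick a site visited `a+b` times on `[1,n]`
  obtain ⟨k, hk, hkcard⟩ : ∃ k ∈ Finset.Icc 1 n,
      a + b ≤ ((Finset.Icc 1 n).filter fun j => walk x j = walk x k).card := by
    have := hab
    unfold nsup at this
    rcases Finset.le_sup_iff (by omega : (0:ℕ) < a + b) |>.1 this with ⟨k, hk, hk2⟩
    exact ⟨k, hk, hk2⟩
  set y := walk x k with hy
  -- at most `a` visits on `[1,t]`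
  have h1 : (((Finset.Icc 1 t)).filter fun j => walk x j = y).card ≤ a :=
    count_le x a t htmin y
  -- hence at least `b` visits on `(t, n]`
  have hsplit : ((Finset.Icc 1 n).filter fun j => walk x j = y).card ≤
      (((Finset.Icc 1 t)).filter fun j => walk x j = y).card +
      (((Finset.Ioc t n)).filter fun j => walk x j = y).card := by
    refine le_trans (Finset.card_le_card ?_) (Finset.card_union_le _ _)
    intro j hj
    rw [Finset.mem_filter, Finset.mem_Icc] at hj
    rw [Finset.mem_union, Finset.mem_filter, Finset.mem_filter, Finset.mem_Icc,
      Finset.mem_Ioc]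
    omega
  have h2 : b ≤ (((Finset.Ioc t n)).filter fun j => walk x j = y).card := by omega
  -- transport to the shifted walk
  have h3 : (((Finset.Ioc t n)).filter fun j => walk x j = y).card ≤
      ((Finset.Icc 1 (n - t)).filter fun i =>
        walk (fun i => x (t + i)) i = y - walk x t).card := by
    refine Finset.card_le_card_of_injOn (fun j => j - t) ?_ ?_
    · intro j hj
      rw [Finset.mem_coe, Finset.mem_filter, Finset.mem_Ioc] at hj
      simp only [Finset.mem_coe, Finset.mem_filter, Finset.mem_Icc]
      refine ⟨⟨by omega, by omega⟩, ?_⟩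
      rw [walk_shift]
      have : t + (j - t) = j := by omega
      rw [this, hj.2]
    · intro j hj j' hj' hjj
      rw [Finset.mem_coe, Finset.mem_filter, Finset.mem_Ioc] at hj hj'
      have hjj' : j - t = j' - t := hjj
      omega
  have h4 : b ≤ ((Finset.Icc 1 (n - t)).filter fun i =>
      walk (fun i => x (t + i)) i = y - walk x t).card := by omega
  -- the set of shifted visits is nonempty; its elements witness the sup
  have hne : ((Finset.Icc 1 (n - t)).filter fun i =>
      walk (fun i => x (t + i)) i = y - walk x t).Nonempty :=
    Finset.card_pos.1 (by omega)
  rcases hne with ⟨k0, hk0⟩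
  have hk0' := Finset.mem_filter.1 hk0
  refine le_trans ?_ (Finset.le_sup (f := fun k => ((Finset.Icc 1 (n - t)).filter
    fun j => walk (fun i => x (t + i)) j = walk (fun i => x (t + i)) k).card) hk0'.1)
  refine le_trans h4 (Finset.card_le_card ?_)
  intro j hj
  rw [Finset.mem_filter] at hj ⊢
  exact ⟨hj.1, by rw [hj.2, hk0'.2]⟩


/-- Extension of a vector indexed by `Fin m` to `ℕ`, by zero. -/
def extFin (m : ℕ) (v : Fin m → ℤ) : ℕ → ℤ := fun i => if h : i < m then v ⟨i, h⟩ else 0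

/-- Extension of a vector indexed by a finset to `ℕ`, by zero. -/
def extS (s : Finset ℕ) (v : ↥s → ℤ) : ℕ → ℤ :=
  fun i => if h : i ∈ s then v ⟨i, h⟩ else 0

/-- The law of a finite window `(X t, ..., X (t+m-1))` of an i.i.d. sequence does not
depend on `t`. -/
lemma map_window_eq {Ω : Type*} [MeasurableSpace Ω] (P : Measure Ω) [IsProbabilityMeasure P]
    (X : ℕ → Ω → ℤ) (hXmeas : ∀ k, Measurable (X k))
    (hindep : iIndepFun X P)
    (hident : ∀ k, IdentDistrib (X k) (X 0) P P) (m t : ℕ) :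
    Measure.map (fun ω (i : Fin m) => X (t + (i : ℕ)) ω) P
      = Measure.map (fun ω (i : Fin m) => X ((i : ℕ)) ω) P := by
  have meas : ∀ t : ℕ, Measurable (fun ω (i : Fin m) => X (t + (i : ℕ)) ω) :=
    fun t => measurable_pi_lambda _ fun i => hXmeas _
  have single : ∀ (t : ℕ) (v : Fin m → ℤ),
      Measure.map (fun ω (i : Fin m) => X (t + (i : ℕ)) ω) P {v}
        = ∏ i : Fin m, Measure.map (X 0) P {v i} := by
    intro t v
    rw [Measure.map_apply (meas t) (MeasurableSet.singleton v)]
    have hset : (fun ω (i : Fin m) => X (t + (i : ℕ)) ω) ⁻¹' {v}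
        = ⋂ j ∈ Finset.image (fun i : Fin m => t + (i : ℕ)) Finset.univ,
            X j ⁻¹' {z | ∀ i : Fin m, t + (i : ℕ) = j → z = v i} := by
      ext ω
      simp only [Set.mem_preimage, Set.mem_singleton_iff, funext_iff, Set.mem_iInter,
        Finset.mem_image, Finset.mem_univ, true_and, Set.mem_setOf_eq]
      constructor
      · rintro h j ⟨i, rfl⟩ i' hi'
        have hii : i' = i := Fin.ext (by omega)
        subst hii; exact h i'
      · intro h i
        exact h (t + (i : ℕ)) ⟨i, rfl⟩ i rfl
    rw [hset, hindep.measure_inter_preimage_eq_mul _ (fun j _ => MeasurableSet.of_discrete)]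
    rw [Finset.prod_image (fun i _ i' _ h => Fin.ext (by omega : (i : ℕ) = (i' : ℕ)))]
    refine Finset.prod_congr rfl fun i _ => ?_
    have hseteq : {z : ℤ | ∀ i' : Fin m, t + (i' : ℕ) = t + (i : ℕ) → z = v i'} = {v i} := by
      ext z
      simp only [Set.mem_setOf_eq, Set.mem_singleton_iff]
      constructor
      · intro h; exact h i rfl
      · rintro rfl i' h
        have hii : i' = i := Fin.ext (by omega)
        rw [hii]
    rw [hseteq, ← Measure.map_apply (hXmeas _) (MeasurableSet.singleton _),
      (hident (t + (i : ℕ))).map_eq]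
  refine Measure.ext_of_singleton fun v => ?_
  rw [single t v]
  have h0 : (fun ω (i : Fin m) => X ((i : ℕ)) ω) = (fun ω (i : Fin m) => X (0 + (i : ℕ)) ω) := by
    simp
  rw [h0, single 0 v]
/-- Sub-multiplicativity of `a ↦ P[N_n* ≥ a]` for the maximal local time of a random walk. -/
theorem submultiplicative_max_local_time
    {Ω : Type*} [MeasurableSpace Ω] (P : Measure Ω) [IsProbabilityMeasure P]
    (X : ℕ → Ω → ℤ) (hXmeas : ∀ k, Measurable (X k))
    (hindep : iIndepFun X P)
    (hident : ∀ k, IdentDistrib (X k) (X 0) P P)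
    (S : ℕ → Ω → ℤ) (hS : ∀ n ω, S n ω = ∑ k ∈ Finset.range n, X k ω)
    (Nstar : ℕ → Ω → ℕ)
    (hN : ∀ n ω, Nstar n ω = (Finset.Icc 1 n).sup
      (fun k => ((Finset.Icc 1 n).filter (fun j => S j ω = S k ω)).card))
    (n : ℕ) (hn : 1 ≤ n) :
    ∀ a b : ℕ, 0 < a → 0 < b →
      P {ω | a + b ≤ Nstar n ω} ≤ P {ω | a ≤ Nstar n ω} * P {ω | b ≤ Nstar n ω} := by
  intro a b ha hb
  classical
  -- `Nstar` in terms of the deterministic functional `nsup`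
  have hNs : ∀ (m : ℕ) (ω : Ω), Nstar m ω = nsup m (fun i => X i ω) := by
    intro m ω
    rw [hN m ω]
    unfold nsup walk
    simp only [hS]
  -- the stopping-time decomposition events
  set E : ℕ → Set Ω := fun t =>
    {ω | a ≤ nsup t (fun i => X i ω) ∧ ∀ s < t, ¬ a ≤ nsup s (fun i => X i ω)} with hEdef
  set G : ℕ → Set Ω := fun t =>
    {ω | b ≤ nsup (n - t) (fun i => X (t + i) ω)} with hGdef
  -- representation of `E t` through the first `t` increments
  have hErep : ∀ t : ℕ, E t = (fun ω (i : ↥(Finset.range t)) => X (i : ℕ) ω) ⁻¹'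
      {v | a ≤ nsup t (extS (Finset.range t) v) ∧
        ∀ s < t, ¬ a ≤ nsup s (extS (Finset.range t) v)} := by
    intro t
    ext ω
    have hcong : ∀ s ≤ t,
        nsup s (extS (Finset.range t) (fun i : ↥(Finset.range t) => X (i : ℕ) ω))
          = nsup s (fun i => X i ω) := by
      intro s hs
      refine nsup_congr fun i hi => ?_
      have hmem : i ∈ Finset.range t := Finset.mem_range.2 (lt_of_lt_of_le hi hs)
      simp only [extS, dif_pos hmem]
    simp only [hEdef, Set.mem_preimage, Set.mem_setOf_eq]
    constructor
    · rintro ⟨h1, h2⟩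
      exact ⟨by rw [hcong t le_rfl]; exact h1,
        fun s hs => by rw [hcong s (le_of_lt hs)]; exact h2 s hs⟩
    · rintro ⟨h1, h2⟩
      exact ⟨by rw [← hcong t le_rfl]; exact h1,
        fun s hs => by rw [← hcong s (le_of_lt hs)]; exact h2 s hs⟩
  -- representation of `G t` through the increments in `[t, n)`
  have hGrep : ∀ t : ℕ, t ≤ n → G t = (fun ω (i : ↥(Finset.Ico t n)) => X (i : ℕ) ω) ⁻¹'
      {v | b ≤ nsup (n - t) (fun i => extS (Finset.Ico t n) v (t + i))} := by
    intro t htn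
    ext ω
    have hcong :
        nsup (n - t) (fun i => extS (Finset.Ico t n)
            (fun i : ↥(Finset.Ico t n) => X (i : ℕ) ω) (t + i))
          = nsup (n - t) (fun i => X (t + i) ω) := by
      refine nsup_congr fun i hi => ?_
      have hmem : t + i ∈ Finset.Ico t n := Finset.mem_Ico.2 ⟨by omega, by omega⟩
      simp only [extS, dif_pos hmem]
    simp only [hGdef, Set.mem_preimage, Set.mem_setOf_eq]
    rw [hcong]
  -- measurability
  have measE : ∀ t : ℕ, MeasurableSet (E t) := by
    intro t
    rw [hErep t]
    exact (measurable_pi_lambda _ fun i => hXmeas _) MeasurableSet.of_discrete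
  have measG : ∀ t : ℕ, t ≤ n → MeasurableSet (G t) := by
    intro t htn
    rw [hGrep t htn]
    exact (measurable_pi_lambda _ fun i => hXmeas _) MeasurableSet.of_discrete
  -- independence: `P (E t ∩ G t) = P (E t) * P (G t)`
  have indepEG : ∀ t : ℕ, t ≤ n → P (E t ∩ G t) = P (E t) * P (G t) := by
    intro t htn
    have hdisj : Disjoint (Finset.range t) (Finset.Ico t n) := by
      rw [Finset.range_eq_Ico]
      exact Finset.Ico_disjoint_Ico_consecutive 0 t n
    have hIndep := hindep.indepFun_finset (Finset.range t) (Finset.Ico t n) hdisj hXmeas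
    rw [hErep t, hGrep t htn]
    exact hIndep.measure_inter_preimage_eq_mul _ _ MeasurableSet.of_discrete
      MeasurableSet.of_discrete
  -- distribution of `G t`
  have hGle : ∀ t : ℕ, t ≤ n → P (G t) ≤ P {ω | b ≤ Nstar n ω} := by
    intro t htn
    set m' := n - t with hm'
    have hrep1 : G t = (fun ω (i : Fin m') => X (t + (i : ℕ)) ω) ⁻¹'
        {v | b ≤ nsup m' (extFin m' v)} := by
      ext ω
      have hcong : nsup m' (extFin m' (fun i : Fin m' => X (t + (i : ℕ)) ω))
          = nsup m' (fun i => X (t + i) ω) := by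
        refine nsup_congr fun i hi => ?_
        simp only [extFin, dif_pos hi]
      simp only [hGdef, Set.mem_preimage, Set.mem_setOf_eq]
      rw [hcong]
    have hrep2 : {ω | b ≤ Nstar m' ω} = (fun ω (i : Fin m') => X ((i : ℕ)) ω) ⁻¹'
        {v | b ≤ nsup m' (extFin m' v)} := by
      ext ω
      have hcong : nsup m' (extFin m' (fun i : Fin m' => X ((i : ℕ)) ω))
          = nsup m' (fun i => X i ω) := by
        refine nsup_congr fun i hi => ?_
        simp only [extFin, dif_pos hi]
      simp only [Set.mem_preimage, Set.mem_setOf_eq, hNs]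
      rw [hcong]
    have e1 : P (G t) = P {ω | b ≤ Nstar m' ω} := by
      rw [hrep1, hrep2,
        ← Measure.map_apply (measurable_pi_lambda _ fun i => hXmeas _)
          MeasurableSet.of_discrete,
        ← Measure.map_apply (measurable_pi_lambda _ fun i => hXmeas _)
          MeasurableSet.of_discrete,
        map_window_eq P X hXmeas hindep hident m' t]
    rw [e1]
    refine measure_mono fun ω hω => ?_
    simp only [Set.mem_setOf_eq, hNs] at hω ⊢
    exact le_trans hω (nsup_mono _ (by omega))
  -- covering of the event by the stopping-time decomposition
  have cover : {ω | a + b ≤ Nstar n ω} ⊆ ⋃ t ∈ Finset.Icc 1 n, E t ∩ G t := by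
    intro ω hω
    simp only [Set.mem_setOf_eq, hNs] at hω
    have hex : ∃ s, a ≤ nsup s (fun i => X i ω) := ⟨n, le_trans (by omega) hω⟩
    set t := Nat.find hex with htdef
    have htspec : a ≤ nsup t (fun i => X i ω) := Nat.find_spec hex
    have htmin : ∀ s < t, ¬ a ≤ nsup s (fun i => X i ω) := fun s hs => Nat.find_min hex hs
    have htn : t ≤ n := Nat.find_min' hex (le_trans (by omega) hω)
    have ht1 : 1 ≤ t := by
      by_contra hcon
      push_neg at hcon
      interval_cases t
      · rw [nsup_zero] at htspec; omega
    refine Set.mem_biUnion (Finset.mem_Icc.2 ⟨ht1, htn⟩) ?_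
    refine ⟨⟨htspec, htmin⟩, ?_⟩
    simp only [hGdef, Set.mem_setOf_eq]
    exact key_shift (fun i => X i ω) n a b t ha hb hω htmin htn
  -- the events `E t` are pairwise disjoint and contained in `{a ≤ Nstar n}`
  have Edisj : (↑(Finset.Icc 1 n) : Set ℕ).PairwiseDisjoint E := by
    intro t _ t' _ hne
    refine Set.disjoint_left.2 fun ω h1 h2 => ?_
    simp only [hEdef, Set.mem_setOf_eq] at h1 h2
    rcases lt_trichotomy t t' with h | h | h
    · exact h2.2 t h h1.1
    · exact absurd h hne
    · exact h1.2 t' h h2.1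
  have Esub : (⋃ t ∈ Finset.Icc 1 n, E t) ⊆ {ω | a ≤ Nstar n ω} := by
    refine Set.iUnion₂_subset fun t ht ω hω => ?_
    simp only [hEdef, Set.mem_setOf_eq] at hω
    simp only [Set.mem_setOf_eq, hNs]
    exact le_trans hω.1 (nsup_mono _ (Finset.mem_Icc.1 ht).2)
  -- putting everything together
  calc P {ω | a + b ≤ Nstar n ω}
      ≤ P (⋃ t ∈ Finset.Icc 1 n, E t ∩ G t) := measure_mono cover
    _ ≤ ∑ t ∈ Finset.Icc 1 n, P (E t ∩ G t) := measure_biUnion_finset_le _ _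
    _ = ∑ t ∈ Finset.Icc 1 n, P (E t) * P (G t) :=
        Finset.sum_congr rfl fun t ht => indepEG t (Finset.mem_Icc.1 ht).2
    _ ≤ ∑ t ∈ Finset.Icc 1 n, P (E t) * P {ω | b ≤ Nstar n ω} :=
        Finset.sum_le_sum fun t ht => mul_le_mul_right (hGle t (Finset.mem_Icc.1 ht).2) _
    _ = (∑ t ∈ Finset.Icc 1 n, P (E t)) * P {ω | b ≤ Nstar n ω} :=
        (Finset.sum_mul _ _ _).symm
    _ = P (⋃ t ∈ Finset.Icc 1 n, E t) * P {ω | b ≤ Nstar n ω} := by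
        rw [measure_biUnion_finset Edisj fun t _ => measE t]
    _ ≤ P {ω | a ≤ Nstar n ω} * P {ω | b ≤ Nstar n ω} :=
        mul_le_mul_left (measure_mono Esub) _
end

section
/- The function f(p) = ((1−p)e^t − 1 + 2p) / (1 − (1−p)e^{−t}) is decreasing in p on (0,1) for every fixed t > 0, with limits f(0⁺) = e^t and f(1⁻) = 1. -/
open Set Filter

/-- The function `f(p) = ((1-p)eᵗ - 1 + 2p)/(1 - (1-p)e^{-t})` is strictly decreasing
on `(0,1)` with limits `eᵗ` at `0⁺` and `1` at `1⁻`. -/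
theorem f_decreasing_with_limits
    (t : ℝ) (ht : 0 < t) (f : ℝ → ℝ)
    (hf : ∀ p, f p = ((1 - p) * Real.exp t - 1 + 2 * p) / (1 - (1 - p) * Real.exp (-t))) :
    StrictAntiOn f (Set.Ioo 0 1) ∧
    Tendsto f (nhdsWithin 0 (Set.Ioi 0)) (nhds (Real.exp t)) ∧
    Tendsto f (nhdsWithin 1 (Set.Iio 1)) (nhds 1) := by
  have hE : 1 < Real.exp t := by simpa using Real.exp_lt_exp.mpr ht
  have he1 : Real.exp (-t) < 1 := Real.exp_lt_one_iff.mpr (by linarith)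
  have hepos : 0 < Real.exp (-t) := Real.exp_pos _
  have hee : Real.exp (-t) * Real.exp t = 1 := by
    rw [← Real.exp_add]; simp
  have hD : ∀ p : ℝ, 0 ≤ p → 0 < 1 - (1 - p) * Real.exp (-t) := by
    intro p hp
    nlinarith
  have hdet : 0 < Real.exp t + Real.exp (-t) - 2 := by
    nlinarith [mul_pos (sub_pos.mpr hE) (sub_pos.mpr he1)]
  refine ⟨?_, ?_, ?_⟩
  · intro p hp q hq hpq
    rw [hf, hf]
    rw [div_lt_div_iff₀ (hD q hq.1.le) (hD p hp.1.le)]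
    nlinarith [mul_pos hdet (sub_pos.mpr hpq)]
  · have hf0 : f 0 = Real.exp t := by
      rw [hf]
      rw [div_eq_iff (by have := hD 0 le_rfl; simpa using this.ne')]
      nlinarith
    have : ContinuousAt f 0 := by
      have : f = fun p => ((1 - p) * Real.exp t - 1 + 2 * p) / (1 - (1 - p) * Real.exp (-t)) :=
        funext hf
      rw [this]
      apply ContinuousAt.div (by fun_prop) (by fun_prop)
      have := hD 0 le_rfl
      simpa using this.ne'
    rw [← hf0]
    exact this.continuousWithinAt.tendsto
  · have hf1 : f 1 = 1 := by rw [hf]; norm_num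
    have : ContinuousAt f 1 := by
      have : f = fun p => ((1 - p) * Real.exp t - 1 + 2 * p) / (1 - (1 - p) * Real.exp (-t)) :=
        funext hf
      rw [this]
      apply ContinuousAt.div (by fun_prop) (by fun_prop)
      have := hD 1 zero_le_one
      simpa using this.ne'
    have h := this.continuousWithinAt.tendsto (s := Set.Iio 1)
    rwa [hf1] at h
end
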